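/- If X is a real random variable with E[X] = 0 and E[X²] = σ², then for every x ≥ 0, 2·E[(X - x)⁺] ≤ sqrt(σ² + x²) - x. -/

import Mathlib

open MeasureTheory ProbabilityTheory

/-- If E[X] = 0 and E[X²] = σ², then for every x ≥ 0,
2·E[(X - x)⁺] ≤ sqrt(σ² + x²) - x. -/
theorem stmt_2 {Ω : Type*} [MeasureSpace Ω] [IsProbabilityMeasure (ℙ : Measure Ω)]
    (X : Ω → ℝ) (σ x : ℝ) (hx : 0 ≤ x)
    (hInt : Integrable X) (hInt2 : Integrable (fun ω => X ω ^ 2))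
    (hmean : ∫ ω, X ω = 0) (hvar : ∫ ω, X ω ^ 2 = σ ^ 2) :
    2 * ∫ ω, max (X ω - x) 0 ≤ Real.sqrt (σ ^ 2 + x ^ 2) - x := by
  set Y : Ω → ℝ := fun ω => X ω - x with hY
  have hYint : Integrable Y := hInt.sub (integrable_const x)
  have hYsq : Integrable (fun ω => Y ω ^ 2) := by
    have h : (fun ω => Y ω ^ 2) = fun ω => X ω ^ 2 - (2*x) * X ω + x ^ 2 := by
      funext ω; simp only [hY]; ring
    rw [h]
    exact (hInt2.sub (hInt.const_mul _)).add (integrable_const _)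
  have hYmem : MemLp Y 2 ℙ :=
    (memLp_two_iff_integrable_sq hYint.aestronglyMeasurable).2 hYsq
  have habs : MemLp (fun ω => |Y ω|) 2 ℙ := hYmem.abs
  have hvarnn : 0 ≤ variance (fun ω => |Y ω|) ℙ := variance_nonneg _ _
  have hvar' := variance_eq_sub habs
  simp only [Pi.pow_apply] at hvar'
  have habsint : Integrable (fun ω => |Y ω|) := hYint.abs
  have hsq : ∫ ω, |Y ω| ^ 2 = σ ^ 2 + x ^ 2 := by
    have h1 : (fun ω => |Y ω| ^ 2) = fun ω => X ω ^ 2 - (2*x) * X ω + x ^ 2 := by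
      funext ω; rw [sq_abs]; simp only [hY]; ring
    have hA : Integrable (fun ω => X ω ^ 2 - 2*x * X ω) := by
      exact hInt2.sub (hInt.const_mul _)
    have hB : Integrable (fun ω => 2*x * X ω) := by exact hInt.const_mul _
    rw [h1, integral_add hA (integrable_const _),
        integral_sub hInt2 hB, integral_const_mul, hmean, hvar, integral_const]
    simp
  have habsint_sq : Integrable (fun ω => |Y ω| ^ 2) := by
    simpa only [sq_abs] using hYsq
  have hEabs : ∫ ω, |Y ω| ≤ Real.sqrt (σ ^ 2 + x ^ 2) := by
    have h2 : (∫ ω, |Y ω|) ^ 2 ≤ σ ^ 2 + x ^ 2 := by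
      rw [hsq] at hvar'
      linarith [hvarnn]
    have h3 : 0 ≤ ∫ ω, |Y ω| := integral_nonneg fun ω => abs_nonneg _
    calc ∫ ω, |Y ω| = Real.sqrt ((∫ ω, |Y ω|) ^ 2) := (Real.sqrt_sq h3).symm
    _ ≤ _ := Real.sqrt_le_sqrt h2
  have hEY : ∫ ω, Y ω = -x := by
    simp only [hY]
    rw [integral_sub hInt (integrable_const x), hmean, integral_const]
    simp
  have hmaxeq : (fun ω => max (X ω - x) 0) = fun ω => (|Y ω| + Y ω) / 2 := by
    funext ω
    rcases le_total (Y ω) 0 with h | h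
    · rw [abs_of_nonpos h]
      simp only [hY] at h ⊢
      rw [max_eq_right (by linarith)]; ring
    · rw [abs_of_nonneg h]
      simp only [hY] at h ⊢
      rw [max_eq_left (by linarith)]; ring
  have hEmax : ∫ ω, max (X ω - x) 0 = ((∫ ω, |Y ω|) + ∫ ω, Y ω) / 2 := by
    rw [hmaxeq, integral_div, integral_add habsint hYint]
  rw [hEmax, hEY]
  linarith
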